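/- (Xiang formula) For every trace of length n with m distinct data items and every window length x with 1 ≤ x ≤ n, the total working-set size over all length-x windows satisfies Σ_{t=x}^{n} ω(t,x) = (n−x+1)·m − Σ_{i=x+1}^{n−1} (i−x)·rt(i) − Σ_{e ∈ M} max(f_e − x, 0) − Σ_{e ∈ M} max((n+1−l_e) − x, 0); equivalently, fp(x) = m − (1/(n−x+1))·[Σ_{i=x+1}^{n−1} (i−x)·rt(i) + Σ_{e ∈ M} max(f_e − x, 0) + Σ_{e ∈ M} max((n+1−l_e) − x, 0)]. -/

import Mathlib

open Finset

/-- The data set of a trace `a` of length `n` (indices 1..n). -/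
def dataSet (a : ℕ → ℕ) (n : ℕ) : Finset ℕ := (Finset.Icc 1 n).image a

/-- A trace is address-independent: data items are numbered in order of first appearance. -/
def isAI (a : ℕ → ℕ) (n : ℕ) : Prop :=
  ∀ t ∈ Finset.Icc 1 n, 1 ≤ a t ∧ a t ≤ 1 + ((Finset.Ico 1 t).image a).card

/-- Indices `s < t` (with `s ≥ 1`) accessing the same datum as `t`. -/
def prevSet (a : ℕ → ℕ) (t : ℕ) : Finset ℕ :=
  (Finset.Ico 1 t).filter (fun s => a s = a t)

/-- Reuse time of access `t`: `t - s*` where `s*` is the previous access to the same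
datum, or `⊤` for a first access. -/
def reuseTime (a : ℕ → ℕ) (t : ℕ) : ℕ∞ :=
  if h : (prevSet a t).Nonempty then ((t - (prevSet a t).max' h : ℕ) : ℕ∞) else ⊤

/-- Reuse distance of access `t`: the number of distinct data accessed in
`a(s*+1), …, a(t)` where `s*` is the previous access to the same datum,
or `⊤` for a first access. -/
def reuseDist (a : ℕ → ℕ) (t : ℕ) : ℕ∞ :=
  if h : (prevSet a t).Nonempty then
    ((((Finset.Icc ((prevSet a t).max' h + 1) t).image a).card : ℕ) : ℕ∞)
  else ⊤

/-- Reuse-time histogram: number of accesses whose reuse time equals `i`. -/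
def rtHist (a : ℕ → ℕ) (n i : ℕ) : ℕ :=
  ((Finset.Icc 1 n).filter (fun t => reuseTime a t = (i : ℕ∞))).card

/-- Reuse-distance histogram: number of accesses whose reuse distance equals `v`. -/
def rdHist (a : ℕ → ℕ) (n v : ℕ) : ℕ :=
  ((Finset.Icc 1 n).filter (fun t => reuseDist a t = (v : ℕ∞))).card

/-- First access time of datum `e`. -/
noncomputable def firstAcc (a : ℕ → ℕ) (n e : ℕ) : ℕ :=
  sInf {t | t ∈ Finset.Icc 1 n ∧ a t = e}

/-- Last access time of datum `e`. -/
noncomputable def lastAcc (a : ℕ → ℕ) (n e : ℕ) : ℕ :=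
  sSup {t | t ∈ Finset.Icc 1 n ∧ a t = e}

/-- The sorted list of access times of datum `e` in the trace. -/
def occList (a : ℕ → ℕ) (n e : ℕ) : List ℕ :=
  ((Finset.Icc 1 n).filter (fun t => a t = e)).sort (· ≤ ·)

/-- Working-set size `ω(t,x)`: distinct data accessed in the window `a(t-x+1), …, a(t)`. -/
def wss (a : ℕ → ℕ) (t x : ℕ) : ℕ := ((Finset.Icc (t - x + 1) t).image a).card

/-- Footprint: the average working-set size over all length-`x` windows. -/
def fp (a : ℕ → ℕ) (n x : ℕ) : ℚ :=
  (∑ t ∈ Finset.Icc x n, (wss a t x : ℚ)) / ((n : ℚ) - (x : ℚ) + 1)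

/-- Total working-set size `W(x) = Σ_{t=x}^{n} ω(t,x)`, with `W(0) = 0`. -/
def totalW (a : ℕ → ℕ) (n x : ℕ) : ℤ :=
  if x = 0 then 0 else ∑ t ∈ Finset.Icc x n, (wss a t x : ℤ)

/-- Steady-state footprint `ss-fp(x) = m - (1/n) Σ_{i=x+1}^{n-1} (i-x)·rt(i)`. -/
def ssfp (a : ℕ → ℕ) (n x : ℕ) : ℚ :=
  ((dataSet a n).card : ℚ)
    - (1 / (n : ℚ)) * ∑ i ∈ Finset.Icc (x + 1) (n - 1), ((i : ℚ) - (x : ℚ)) * (rtHist a n i : ℚ)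


namespace XiangAux

/-- The previous-access index, with junk value 0 when there is none. -/
noncomputable def sPrev (a : ℕ → ℕ) (u : ℕ) : ℕ := WithBot.unbotD 0 (prevSet a u).max

lemma sPrev_mem {a : ℕ → ℕ} {u : ℕ} (h : (prevSet a u).Nonempty) :
    sPrev a u ∈ prevSet a u := by
  obtain ⟨b, hb⟩ := Finset.max_of_nonempty h
  unfold sPrev
  rw [hb]
  exact Finset.mem_of_max hb

lemma le_sPrev {a : ℕ → ℕ} {u s : ℕ} (hs : s ∈ prevSet a u) : s ≤ sPrev a u := by
  obtain ⟨b, hb⟩ := Finset.max_of_nonempty ⟨s, hs⟩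
  unfold sPrev
  rw [hb]
  exact Finset.le_max_of_eq hs hb

lemma sPrev_spec {a : ℕ → ℕ} {u : ℕ} (h : (prevSet a u).Nonempty) :
    1 ≤ sPrev a u ∧ sPrev a u < u ∧ a (sPrev a u) = a u := by
  have := sPrev_mem h
  rw [prevSet, Finset.mem_filter, Finset.mem_Ico] at this
  exact ⟨this.1.1, this.1.2, this.2⟩

lemma reuseTime_eq {a : ℕ → ℕ} {u : ℕ} (h : (prevSet a u).Nonempty) :
    reuseTime a u = ((u - sPrev a u : ℕ) : ℕ∞) := by
  rw [reuseTime, dif_pos h]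
  congr 2
  exact le_antisymm (le_sPrev (Finset.max'_mem _ h)) (Finset.le_max' _ _ (sPrev_mem h))


lemma key_count (a : ℕ → ℕ) (n x e : ℕ) (hx1 : 1 ≤ x) (hxn : x ≤ n)
    (he : e ∈ dataSet a n) :
    ((Finset.Icc x n).filter
        (fun t => e ∉ (Finset.Icc (t - x + 1) t).image a)).card
      = (firstAcc a n e - x) + (n + 1 - lastAcc a n e - x)
        + ∑ u ∈ (Finset.Icc 1 n).filter
            (fun u => (prevSet a u).Nonempty ∧ a u = e),
            (u - sPrev a u - x) := by
  classical
  set F := firstAcc a n e with hF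
  set L := lastAcc a n e with hL
  have hene : {t | t ∈ Finset.Icc 1 n ∧ a t = e}.Nonempty := by
    rw [dataSet, Finset.mem_image] at he
    obtain ⟨t, ht, hat⟩ := he
    exact ⟨t, ht, hat⟩
  have hbdd : BddAbove {t | t ∈ Finset.Icc 1 n ∧ a t = e} :=
    ⟨n, fun t ht => (Finset.mem_Icc.1 ht.1).2⟩
  have hFmem : F ∈ Finset.Icc 1 n ∧ a F = e := Nat.sInf_mem hene
  have hLmem : L ∈ Finset.Icc 1 n ∧ a L = e := Nat.sSup_mem hene hbdd
  obtain ⟨hFIcc, haF⟩ := hFmem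
  obtain ⟨hLIcc, haL⟩ := hLmem
  rw [Finset.mem_Icc] at hFIcc hLIcc
  have hFmin : ∀ t, 1 ≤ t → t ≤ n → a t = e → F ≤ t := fun t h1 h2 h3 =>
    Nat.sInf_le ⟨Finset.mem_Icc.2 ⟨h1, h2⟩, h3⟩
  have hLmax : ∀ t, 1 ≤ t → t ≤ n → a t = e → t ≤ L := fun t h1 h2 h3 =>
    le_csSup hbdd ⟨Finset.mem_Icc.2 ⟨h1, h2⟩, h3⟩
  have hFL : F ≤ L := hFmin L hLIcc.1 hLIcc.2 haL
  set Ue := (Finset.Icc 1 n).filter (fun u => (prevSet a u).Nonempty ∧ a u = e)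
    with hUe
  set B := Ue.biUnion (fun u => Finset.Icc (sPrev a u + x) (u - 1)) with hB
  -- the set equality
  have hS : (Finset.Icc x n).filter
      (fun t => e ∉ (Finset.Icc (t - x + 1) t).image a)
      = (Finset.Icc x (F - 1) ∪ B) ∪ Finset.Icc (L + x) n := by
    ext t
    simp only [Finset.mem_filter, Finset.mem_union, Finset.mem_Icc]
    constructor
    · rintro ⟨⟨hxt, htn⟩, hmiss⟩
      have hmiss' : ∀ s, t - x + 1 ≤ s → s ≤ t → a s ≠ e := by
        intro s h1 h2 hc
        exact hmiss (Finset.mem_image.2 ⟨s, Finset.mem_Icc.2 ⟨h1, h2⟩, hc⟩)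
      by_cases h1 : t < F
      · exact Or.inl (Or.inl ⟨hxt, by omega⟩)
      by_cases h2 : L + x ≤ t
      · exact Or.inr ⟨h2, htn⟩
      push_neg at h1 h2
      have htL : t < L := by
        by_contra hc
        push_neg at hc
        exact hmiss' L (by omega) hc haL
      set V : Set ℕ := {v | t < v ∧ v ≤ n ∧ a v = e} with hV
      have hVne : V.Nonempty := ⟨L, htL, hLIcc.2, haL⟩
      obtain ⟨htu, hun, hau⟩ := Nat.sInf_mem hVne
      set u := sInf V with hu
      have humin : ∀ v, t < v → v ≤ n → a v = e → u ≤ v := fun v hv1 hv2 hv3 =>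
        Nat.sInf_le ⟨hv1, hv2, hv3⟩
      have hFprev : F ∈ prevSet a u := by
        rw [prevSet, Finset.mem_filter, Finset.mem_Ico]
        exact ⟨⟨hFIcc.1, by omega⟩, by rw [haF, hau]⟩
      have hpne : (prevSet a u).Nonempty := ⟨F, hFprev⟩
      obtain ⟨hsp1, hspu, hspe⟩ := sPrev_spec hpne
      have hspt : sPrev a u ≤ t := by
        by_contra hc
        push_neg at hc
        have := humin _ hc (by omega) (hspe.trans hau)
        omega
      have hspx : sPrev a u + x ≤ t := by
        by_contra hc
        push_neg at hc
        exact hmiss' (sPrev a u) (by omega) hspt (hspe.trans hau)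
      refine Or.inl (Or.inr (Finset.mem_biUnion.2 ⟨u, ?_, ?_⟩))
      · exact Finset.mem_filter.2 ⟨Finset.mem_Icc.2 ⟨by omega, hun⟩, hpne, hau⟩
      · exact Finset.mem_Icc.2 ⟨hspx, by omega⟩
    · rintro ((⟨hxt, htF⟩ | hBmem) | ⟨hLt, htn⟩)
      · refine ⟨⟨hxt, by omega⟩, fun hmem => ?_⟩
        obtain ⟨s, hs, hse⟩ := Finset.mem_image.1 hmem
        rw [Finset.mem_Icc] at hs
        have := hFmin s (by omega) (by omega) hse
        omega
      · obtain ⟨u, hu, ht⟩ := Finset.mem_biUnion.1 hBmem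
        rw [hUe, Finset.mem_filter, Finset.mem_Icc] at hu
        obtain ⟨⟨hu1, hun⟩, hpne, hau⟩ := hu
        rw [Finset.mem_Icc] at ht
        obtain ⟨hsp1, hspu, hspe⟩ := sPrev_spec hpne
        refine ⟨⟨by omega, by omega⟩, fun hmem => ?_⟩
        obtain ⟨s, hs, hse⟩ := Finset.mem_image.1 hmem
        rw [Finset.mem_Icc] at hs
        have hsprev : s ∈ prevSet a u := by
          rw [prevSet, Finset.mem_filter, Finset.mem_Ico]
          exact ⟨⟨by omega, by omega⟩, by rw [hse, hau]⟩
        have := le_sPrev hsprev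
        omega
      · refine ⟨⟨by omega, htn⟩, fun hmem => ?_⟩
        obtain ⟨s, hs, hse⟩ := Finset.mem_image.1 hmem
        rw [Finset.mem_Icc] at hs
        have := hLmax s (by omega) (by omega) hse
        omega
  -- pairwise disjointness inside the biUnion
  have hpair : ∀ u ∈ Ue, ∀ v ∈ Ue, u ≠ v →
      Disjoint (Finset.Icc (sPrev a u + x) (u - 1))
        (Finset.Icc (sPrev a v + x) (v - 1)) := by
    have hkey : ∀ u v, u ∈ Ue → v ∈ Ue → u < v →
        Disjoint (Finset.Icc (sPrev a u + x) (u - 1))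
          (Finset.Icc (sPrev a v + x) (v - 1)) := by
      intro u v hu hv huv
      rw [hUe, Finset.mem_filter, Finset.mem_Icc] at hu hv
      obtain ⟨⟨hu1, hun⟩, hupne, hau⟩ := hu
      obtain ⟨⟨hv1, hvn⟩, hvpne, hav⟩ := hv
      have huprev : u ∈ prevSet a v := by
        rw [prevSet, Finset.mem_filter, Finset.mem_Ico]
        exact ⟨⟨hu1, huv⟩, by rw [hau, hav]⟩
      have := le_sPrev huprev
      rw [Finset.disjoint_left]
      intro t ht ht'
      rw [Finset.mem_Icc] at ht ht'
      omega
    intro u hu v hv hne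
    rcases lt_or_gt_of_ne hne with h | h
    · exact hkey u v hu hv h
    · exact (hkey v u hv hu h).symm
  have hdisjAB : Disjoint (Finset.Icc x (F - 1)) B := by
    rw [Finset.disjoint_left]
    intro t ht htB
    rw [Finset.mem_Icc] at ht
    obtain ⟨u, hu, htu⟩ := Finset.mem_biUnion.1 htB
    rw [hUe, Finset.mem_filter, Finset.mem_Icc] at hu
    obtain ⟨⟨hu1, hun⟩, hpne, hau⟩ := hu
    obtain ⟨hsp1, hspu, hspe⟩ := sPrev_spec hpne
    have := hFmin (sPrev a u) hsp1 (by omega) (hspe.trans hau)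
    rw [Finset.mem_Icc] at htu
    omega
  have hdisjC : Disjoint (Finset.Icc x (F - 1) ∪ B) (Finset.Icc (L + x) n) := by
    rw [Finset.disjoint_left]
    intro t ht htC
    rw [Finset.mem_Icc] at htC
    rcases Finset.mem_union.1 ht with hA | htB
    · rw [Finset.mem_Icc] at hA
      omega
    · obtain ⟨u, hu, htu⟩ := Finset.mem_biUnion.1 htB
      rw [hUe, Finset.mem_filter, Finset.mem_Icc] at hu
      obtain ⟨⟨hu1, hun⟩, hpne, hau⟩ := hu
      have := hLmax u hu1 hun hau
      rw [Finset.mem_Icc] at htu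
      omega
  rw [hS, Finset.card_union_of_disjoint hdisjC,
    Finset.card_union_of_disjoint hdisjAB, Finset.card_biUnion hpair]
  have hA : (Finset.Icc x (F - 1)).card = F - x := by
    rw [Nat.card_Icc]; omega
  have hC : (Finset.Icc (L + x) n).card = n + 1 - L - x := by
    rw [Nat.card_Icc]; omega
  have hBcard : ∀ u ∈ Ue, (Finset.Icc (sPrev a u + x) (u - 1)).card
      = u - sPrev a u - x := by
    intro u hu
    rw [hUe, Finset.mem_filter, Finset.mem_Icc] at hu
    rw [Nat.card_Icc]
    omega
  rw [hA, hC, Finset.sum_congr rfl hBcard]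
  omega


lemma natCast_sub_eq_max (p q : ℕ) : ((p - q : ℕ) : ℤ) = max ((p : ℤ) - q) 0 := by
  rcases le_total p q with h | h
  · have h' : (p : ℤ) ≤ q := by exact_mod_cast h
    simp [Nat.sub_eq_zero_of_le h, max_eq_right (sub_nonpos.2 h')]
  · have h' : (q : ℤ) ≤ p := by exact_mod_cast h
    rw [Nat.cast_sub h, max_eq_left (sub_nonneg.2 h')]

lemma sum_wss_add (a : ℕ → ℕ) (n x : ℕ) (hxn : x ≤ n) :
    ∑ t ∈ Finset.Icc x n, wss a t x
      + ∑ e ∈ dataSet a n, ((Finset.Icc x n).filter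
          (fun t => e ∉ (Finset.Icc (t - x + 1) t).image a)).card
      = (dataSet a n).card * (n + 1 - x) := by
  classical
  have h1 : ∑ t ∈ Finset.Icc x n, wss a t x
      = ∑ e ∈ dataSet a n, ((Finset.Icc x n).filter
          (fun t => e ∈ (Finset.Icc (t - x + 1) t).image a)).card := by
    have h2 : ∀ t ∈ Finset.Icc x n, wss a t x
        = ((dataSet a n).filter
            (fun e => e ∈ (Finset.Icc (t - x + 1) t).image a)).card := by
      intro t ht
      rw [Finset.mem_Icc] at ht
      have hsub : (Finset.Icc (t - x + 1) t).image a ⊆ dataSet a n := by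
        rw [dataSet]
        exact Finset.image_subset_image (Finset.Icc_subset_Icc (by omega) ht.2)
      rw [wss]
      congr 1
      rw [Finset.filter_mem_eq_inter, Finset.inter_eq_right.2 hsub]
    rw [Finset.sum_congr rfl h2]
    simp_rw [Finset.card_filter]
    exact Finset.sum_comm
  rw [h1, ← Finset.sum_add_distrib,
    Finset.sum_congr rfl
      (fun e _ => Finset.card_filter_add_card_filter_not
        (p := fun t => e ∈ (Finset.Icc (t - x + 1) t).image a)),
    Finset.sum_const, Nat.card_Icc, smul_eq_mul]

lemma rt_sum (a : ℕ → ℕ) (n x : ℕ) :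
    ∑ u ∈ (Finset.Icc 1 n).filter (fun u => (prevSet a u).Nonempty),
        (u - sPrev a u - x)
      = ∑ i ∈ Finset.Icc 1 (n - 1), (i - x) * rtHist a n i := by
  classical
  set U := (Finset.Icc 1 n).filter (fun u => (prevSet a u).Nonempty) with hU
  have hmap : ∀ u ∈ U, u - sPrev a u ∈ Finset.Icc 1 (n - 1) := by
    intro u hu
    rw [hU, Finset.mem_filter, Finset.mem_Icc] at hu
    obtain ⟨⟨h1, h2⟩, hne⟩ := hu
    obtain ⟨hs1, hs2, _⟩ := sPrev_spec hne
    rw [Finset.mem_Icc]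
    omega
  rw [← Finset.sum_fiberwise_of_maps_to hmap (fun u => u - sPrev a u - x)]
  refine Finset.sum_congr rfl (fun i hi => ?_)
  rw [Finset.mem_Icc] at hi
  have hfil : U.filter (fun u => u - sPrev a u = i)
      = (Finset.Icc 1 n).filter (fun t => reuseTime a t = (i : ℕ∞)) := by
    rw [hU, Finset.filter_filter]
    refine Finset.filter_congr (fun u _ => ?_)
    constructor
    · rintro ⟨hne, hr⟩
      rw [reuseTime_eq hne, hr]
    · intro h
      have hne : (prevSet a u).Nonempty := by
        by_contra hc
        rw [reuseTime, dif_neg hc] at h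
        exact (ENat.coe_ne_top i) h.symm
      refine ⟨hne, ?_⟩
      rw [reuseTime_eq hne] at h
      exact_mod_cast h
  calc ∑ u ∈ U.filter (fun u => u - sPrev a u = i), (u - sPrev a u - x)
      = ∑ _u ∈ U.filter (fun u => u - sPrev a u = i), (i - x) := by
        refine Finset.sum_congr rfl (fun u hu => ?_)
        rw [(Finset.mem_filter.1 hu).2]
    _ = (U.filter (fun u => u - sPrev a u = i)).card * (i - x) := by
        rw [Finset.sum_const, smul_eq_mul]
    _ = (i - x) * rtHist a n i := by
        rw [hfil, rtHist, mul_comm]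

lemma cast_rt_sum (n x : ℕ) (r : ℕ → ℕ) :
    ((∑ i ∈ Finset.Icc 1 (n - 1), (i - x) * r i : ℕ) : ℤ)
      = ∑ i ∈ Finset.Icc (x + 1) (n - 1), ((i : ℤ) - x) * r i := by
  rw [Nat.cast_sum]
  rw [← Finset.sum_subset (Finset.Icc_subset_Icc (by omega : 1 ≤ x + 1) le_rfl)
      (fun i hi hni => ?_)]
  · refine Finset.sum_congr rfl (fun i hi => ?_)
    rw [Finset.mem_Icc] at hi
    have : x ≤ i := by omega
    push_cast [Nat.cast_sub this]
    ring
  · rw [Finset.mem_Icc] at hi hni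
    have : i ≤ x := by omega
    rw [Nat.sub_eq_zero_of_le this]
    simp

end XiangAux

/-- The Xiang formula for the (total) footprint. -/
theorem xiang_formula (n m x : ℕ) (a : ℕ → ℕ) (hm : (dataSet a n).card = m)
    (hx1 : 1 ≤ x) (hxn : x ≤ n) :
    (∑ t ∈ Finset.Icc x n, (wss a t x : ℤ))
      = ((n : ℤ) - (x : ℤ) + 1) * m
        - ∑ i ∈ Finset.Icc (x + 1) (n - 1), ((i : ℤ) - (x : ℤ)) * (rtHist a n i : ℤ)
        - ∑ e ∈ dataSet a n, max ((firstAcc a n e : ℤ) - (x : ℤ)) 0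
        - ∑ e ∈ dataSet a n, max (((n : ℤ) + 1 - (lastAcc a n e : ℤ)) - (x : ℤ)) 0
    ∧ fp a n x
      = (m : ℚ) - (1 / ((n : ℚ) - (x : ℚ) + 1)) *
          ((∑ i ∈ Finset.Icc (x + 1) (n - 1), ((i : ℚ) - (x : ℚ)) * (rtHist a n i : ℚ))
            + (∑ e ∈ dataSet a n, max ((firstAcc a n e : ℚ) - (x : ℚ)) 0)
            + (∑ e ∈ dataSet a n, max (((n : ℚ) + 1 - (lastAcc a n e : ℚ)) - (x : ℚ)) 0)) := by
  classical
  open XiangAux in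
  -- abbreviations
  have hNe : ∀ e ∈ dataSet a n,
      ((Finset.Icc x n).filter
          (fun t => e ∉ (Finset.Icc (t - x + 1) t).image a)).card
        = (firstAcc a n e - x) + (n + 1 - lastAcc a n e - x)
          + ∑ u ∈ (Finset.Icc 1 n).filter
              (fun u => (prevSet a u).Nonempty ∧ a u = e),
              (u - sPrev a u - x) :=
    fun e he => key_count a n x e hx1 hxn he
  have hW := sum_wss_add a n x hxn
  rw [Finset.sum_congr rfl hNe] at hW
  have hsplit : ∑ e ∈ dataSet a n,
      ((firstAcc a n e - x) + (n + 1 - lastAcc a n e - x)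
        + ∑ u ∈ (Finset.Icc 1 n).filter
            (fun u => (prevSet a u).Nonempty ∧ a u = e), (u - sPrev a u - x))
      = (∑ e ∈ dataSet a n, (firstAcc a n e - x))
        + (∑ e ∈ dataSet a n, (n + 1 - lastAcc a n e - x))
        + ∑ e ∈ dataSet a n, ∑ u ∈ (Finset.Icc 1 n).filter
            (fun u => (prevSet a u).Nonempty ∧ a u = e), (u - sPrev a u - x) := by
    rw [Finset.sum_add_distrib, Finset.sum_add_distrib]
  rw [hsplit] at hW
  have hfib : ∑ e ∈ dataSet a n, ∑ u ∈ (Finset.Icc 1 n).filter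
        (fun u => (prevSet a u).Nonempty ∧ a u = e), (u - sPrev a u - x)
      = ∑ u ∈ (Finset.Icc 1 n).filter (fun u => (prevSet a u).Nonempty),
          (u - sPrev a u - x) := by
    have hff : ∀ e, (Finset.Icc 1 n).filter
          (fun u => (prevSet a u).Nonempty ∧ a u = e)
        = ((Finset.Icc 1 n).filter
            (fun u => (prevSet a u).Nonempty)).filter (fun u => a u = e) := by
      intro e
      rw [Finset.filter_filter]
    simp_rw [hff]
    exact Finset.sum_fiberwise_of_maps_to
      (fun u hu => by
        rw [dataSet]
        exact Finset.mem_image_of_mem a (Finset.filter_subset _ _ hu)) _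
  rw [hfib, rt_sum a n x] at hW
  -- cast hW to ℤ
  have hWZ : (∑ t ∈ Finset.Icc x n, (wss a t x : ℤ))
      + (((∑ e ∈ dataSet a n, (firstAcc a n e - x) : ℕ) : ℤ)
      + ((∑ e ∈ dataSet a n, (n + 1 - lastAcc a n e - x) : ℕ) : ℤ)
      + ((∑ i ∈ Finset.Icc 1 (n - 1), (i - x) * rtHist a n i : ℕ) : ℤ))
      = ((dataSet a n).card * (n + 1 - x) : ℕ) := by
    exact_mod_cast congrArg (Nat.cast : ℕ → ℤ) hW
  have hFS : ((∑ e ∈ dataSet a n, (firstAcc a n e - x) : ℕ) : ℤ)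
      = ∑ e ∈ dataSet a n, max ((firstAcc a n e : ℤ) - (x : ℤ)) 0 := by
    rw [Nat.cast_sum]
    exact Finset.sum_congr rfl (fun e _ => natCast_sub_eq_max _ _)
  have hLS : ((∑ e ∈ dataSet a n, (n + 1 - lastAcc a n e - x) : ℕ) : ℤ)
      = ∑ e ∈ dataSet a n, max (((n : ℤ) + 1 - (lastAcc a n e : ℤ)) - (x : ℤ)) 0 := by
    rw [Nat.cast_sum]
    refine Finset.sum_congr rfl (fun e _ => ?_)
    have h1 : n + 1 - lastAcc a n e - x = (n + 1) - (lastAcc a n e + x) := by omega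
    rw [h1, natCast_sub_eq_max]
    congr 1
    push_cast
    ring
  have hRT := cast_rt_sum n x (rtHist a n)
  have hC : (((dataSet a n).card * (n + 1 - x) : ℕ) : ℤ)
      = ((n : ℤ) - (x : ℤ) + 1) * m := by
    rw [hm] at *
    push_cast [Nat.cast_sub (by omega : x ≤ n + 1)]
    ring
  have part1 : (∑ t ∈ Finset.Icc x n, (wss a t x : ℤ))
      = ((n : ℤ) - (x : ℤ) + 1) * m
        - ∑ i ∈ Finset.Icc (x + 1) (n - 1), ((i : ℤ) - (x : ℤ)) * (rtHist a n i : ℤ)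
        - ∑ e ∈ dataSet a n, max ((firstAcc a n e : ℤ) - (x : ℤ)) 0
        - ∑ e ∈ dataSet a n, max (((n : ℤ) + 1 - (lastAcc a n e : ℤ)) - (x : ℤ)) 0 := by
    rw [hFS, hLS, hRT, hC] at hWZ
    linarith
  refine ⟨part1, ?_⟩
  -- rational part
  have hden : (0 : ℚ) < (n : ℚ) - (x : ℚ) + 1 := by
    have : (x : ℚ) ≤ (n : ℚ) := by exact_mod_cast hxn
    linarith
  have hcast : ∑ t ∈ Finset.Icc x n, (wss a t x : ℚ)
      = (((n : ℤ) - (x : ℤ) + 1) * m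
        - ∑ i ∈ Finset.Icc (x + 1) (n - 1), ((i : ℤ) - (x : ℤ)) * (rtHist a n i : ℤ)
        - ∑ e ∈ dataSet a n, max ((firstAcc a n e : ℤ) - (x : ℤ)) 0
        - ∑ e ∈ dataSet a n, max (((n : ℤ) + 1 - (lastAcc a n e : ℤ)) - (x : ℤ)) 0
        : ℤ) := by
    rw [← part1]
    push_cast
    rfl
  rw [fp, hcast]
  push_cast
  field_simp
  ring
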